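/- Let n ≥ 1 and define the n-qubit Jordan–Wigner annihilation operators a_i := Z^{⊗i} ⊗ σ⁻ ⊗ I^{⊗(n−1−i)} (σ⁻ = !![0,1;0,0]) as 2^n × 2^n complex matrices. Then the a_i satisfy the canonical anticommutation relations: a_i a_j + a_j a_i = 0 and (a_i)† a_j + a_j (a_i)† = δ_{ij} I for all i, j ∈ {0,…,n−1}, where (a_i)† is the conjugate transpose. -/

import Mathlib

open Matrix Finset
open scoped symmDiff

namespace FQ

/-- Pauli X. -/
noncomputable def X : Matrix (ZMod 2) (ZMod 2) ℂ := !![0, 1; 1, 0]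

/-- Pauli Y. -/
noncomputable def Y : Matrix (ZMod 2) (ZMod 2) ℂ := !![0, -Complex.I; Complex.I, 0]

/-- Pauli Z. -/
noncomputable def Z : Matrix (ZMod 2) (ZMod 2) ℂ := !![1, 0; 0, -1]

/-- Tensor product `M 0 ⊗ M 1 ⊗ ⋯ ⊗ M (n-1)` of a family of single-qubit operators, as a
`2^n × 2^n` matrix indexed by functions `Fin n → ZMod 2`
(the identification of `(ℂ²)^⊗n` with `ℂ^(2^n)`). -/
noncomputable def tens {n : ℕ} (M : Fin n → Matrix (ZMod 2) (ZMod 2) ℂ) :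
    Matrix (Fin n → ZMod 2) (Fin n → ZMod 2) ℂ :=
  Matrix.of fun f g => ∏ i, M i (f i) (g i)

/-- The lowering operator `σ⁻ = (X + iY)/2`. -/
noncomputable def σm : Matrix (ZMod 2) (ZMod 2) ℂ := !![0, 1; 0, 0]

/-- The `n`-qubit Jordan–Wigner annihilation operators: `ann n i = Z^⊗i ⊗ σ⁻ ⊗ I^⊗(n-1-i)`. -/
noncomputable def ann (n i : ℕ) : Matrix (Fin n → ZMod 2) (Fin n → ZMod 2) ℂ :=
  tens fun j => if (j : ℕ) < i then Z else if (j : ℕ) = i then σm else 1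

lemma sumZ2 (f : ZMod 2 → ℂ) : ∑ x : ZMod 2, f x = f 0 + f 1 := Fin.sum_univ_two f

lemma fa (P : ZMod 2 → Prop) : (∀ i, P i) ↔ P 0 ∧ P 1 := Fin.forall_fin_two
lemma Zent : Z 0 0 = 1 ∧ Z 0 1 = 0 ∧ Z 1 0 = 0 ∧ Z 1 1 = -1 := ⟨rfl, rfl, rfl, rfl⟩
lemma σment : σm 0 0 = 0 ∧ σm 0 1 = 1 ∧ σm 1 0 = 0 ∧ σm 1 1 = 0 := ⟨rfl, rfl, rfl, rfl⟩

-- 2x2 facts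
lemma ZZ : Z * Z = 1 := by
  ext i j; revert i j; simp only [fa]
  simp [Zent, Matrix.mul_apply, sumZ2, Matrix.one_apply]

lemma Zσm_anti : Z * σm = -(σm * Z) := by
  ext i j; revert i j; simp only [fa]
  simp [Zent, σment, Matrix.mul_apply, sumZ2]

lemma σmZ_anti : σm * Z = -(Z * σm) := by rw [Zσm_anti, neg_neg]

lemma σmσm : σm * σm = 0 := by
  ext i j; revert i j; simp only [fa]
  simp [σment, Matrix.mul_apply, sumZ2]

lemma ZH : Zᴴ = Z := by
  ext i j; revert i j; simp only [fa]
  simp [Zent, Matrix.conjTranspose_apply]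

lemma Zσp_anti : Z * σmᴴ = -(σmᴴ * Z) := by
  ext i j; revert i j; simp only [fa]
  simp [Zent, σment, Matrix.mul_apply, sumZ2, Matrix.conjTranspose_apply]

lemma σpZ_anti : σmᴴ * Z = -(Z * σmᴴ) := by rw [Zσp_anti, neg_neg]

lemma σpσm_add : σmᴴ * σm + σm * σmᴴ = 1 := by
  ext i j; revert i j; simp only [fa]
  simp [σment, Matrix.mul_apply, sumZ2, Matrix.conjTranspose_apply, Matrix.one_apply]

-- tens lemmas
lemma tens_mul {n : ℕ} (M N : Fin n → Matrix (ZMod 2) (ZMod 2) ℂ) :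
    tens M * tens N = tens fun i => M i * N i := by
  ext f g
  simp only [tens, Matrix.of_apply, Matrix.mul_apply]
  rw [Finset.prod_univ_sum, Fintype.piFinset_univ]
  exact Finset.sum_congr rfl fun h _ => (Finset.prod_mul_distrib).symm

lemma tens_conjTranspose {n : ℕ} (M : Fin n → Matrix (ZMod 2) (ZMod 2) ℂ) :
    (tens M)ᴴ = tens fun i => (M i)ᴴ := by
  ext f g
  simp [tens, Matrix.conjTranspose_apply, map_prod]

lemma tens_one {n : ℕ} : tens (fun _ : Fin n => (1 : Matrix (ZMod 2) (ZMod 2) ℂ)) = 1 := by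
  ext f g
  simp only [tens, Matrix.of_apply, Matrix.one_apply]
  by_cases h : f = g
  · subst h; simp
  · rw [if_neg h]
    obtain ⟨i, hi⟩ := Function.ne_iff.mp h
    exact Finset.prod_eq_zero (Finset.mem_univ i) (by simp [Matrix.one_apply, hi])

lemma tens_neg_of {n : ℕ} (M N : Fin n → Matrix (ZMod 2) (ZMod 2) ℂ) (i0 : Fin n)
    (h : M i0 = -N i0) (h2 : ∀ k, k ≠ i0 → M k = N k) : tens M = -tens N := by
  ext f g
  simp only [tens, Matrix.of_apply, Matrix.neg_apply]
  rw [← Finset.mul_prod_erase _ _ (Finset.mem_univ i0),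
      ← Finset.mul_prod_erase _ (fun i => N i (f i) (g i)) (Finset.mem_univ i0)]
  rw [h]
  rw [Finset.prod_congr rfl (fun k hk => by
    rw [h2 k (Finset.ne_of_mem_erase hk)])]
  simp

lemma tens_zero_of {n : ℕ} (M : Fin n → Matrix (ZMod 2) (ZMod 2) ℂ) (i0 : Fin n)
    (h : M i0 = 0) : tens M = 0 := by
  ext f g
  simp only [tens, Matrix.of_apply, Matrix.zero_apply]
  exact Finset.prod_eq_zero (Finset.mem_univ i0) (by simp [h])

lemma tens_add_to_one {n : ℕ} (M N : Fin n → Matrix (ZMod 2) (ZMod 2) ℂ) (i0 : Fin n)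
    (h1 : ∀ k, k ≠ i0 → M k = 1 ∧ N k = 1) (h2 : M i0 + N i0 = 1) :
    tens M + tens N = 1 := by
  ext f g
  rw [Matrix.add_apply]
  simp only [tens, Matrix.of_apply]
  rw [← Finset.mul_prod_erase _ _ (Finset.mem_univ i0),
      ← Finset.mul_prod_erase _ (fun i => N i (f i) (g i)) (Finset.mem_univ i0)]
  have e1 : (∏ k ∈ Finset.univ.erase i0, M k (f k) (g k)) =
      ∏ k ∈ Finset.univ.erase i0, (1 : Matrix (ZMod 2) (ZMod 2) ℂ) (f k) (g k) :=
    Finset.prod_congr rfl fun k hk => by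
      rw [(h1 k (Finset.ne_of_mem_erase hk)).1]
  have e2 : (∏ k ∈ Finset.univ.erase i0, N k (f k) (g k)) =
      ∏ k ∈ Finset.univ.erase i0, (1 : Matrix (ZMod 2) (ZMod 2) ℂ) (f k) (g k) :=
    Finset.prod_congr rfl fun k hk => by
      rw [(h1 k (Finset.ne_of_mem_erase hk)).2]
  rw [e1, e2, ← add_mul, ← Matrix.add_apply, h2]
  have := congrFun (congrFun tens_one f) g
  simp only [tens, Matrix.of_apply] at this
  rw [← Finset.mul_prod_erase _
    (fun i => (1 : Matrix (ZMod 2) (ZMod 2) ℂ) (f i) (g i)) (Finset.mem_univ i0)] at this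
  exact this

lemma anticomm {n : ℕ} (M N : Fin n → Matrix (ZMod 2) (ZMod 2) ℂ) (i0 : Fin n)
    (h : M i0 * N i0 = -(N i0 * M i0)) (hc : ∀ k, k ≠ i0 → M k * N k = N k * M k) :
    tens M * tens N + tens N * tens M = 0 := by
  rw [tens_mul, tens_mul,
    tens_neg_of (fun k => M k * N k) (fun k => N k * M k) i0 h hc]
  exact neg_add_cancel _

/-- the Jordan–Wigner annihilation operators satisfy the canonical
anticommutation relations `a_i a_j + a_j a_i = 0` and `a_i† a_j + a_j a_i† = δ_{ij} I`. -/
theorem jordan_wigner_canonical_anticommutation (n : ℕ) (hn : 1 ≤ n) :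
    (∀ i j : Fin n, ann n i * ann n j + ann n j * ann n i = 0) ∧
    (∀ i j : Fin n, (ann n i)ᴴ * ann n j + ann n j * (ann n i)ᴴ =
      if i = j then (1 : Matrix (Fin n → ZMod 2) (Fin n → ZMod 2) ℂ) else 0) := by
  have key1 : ∀ i j : Fin n, i ≠ j →
      ann n i * ann n j + ann n j * ann n i = 0 := by
    intro i j hij
    simp only [ann]
    rcases lt_or_gt_of_ne (fun h => hij (Fin.ext h) : (i:ℕ) ≠ (j:ℕ)) with h | h
    · refine anticomm _ _ i ?_ ?_
      · simp only [lt_irrefl, if_false, eq_self_iff_true, if_true, if_pos h]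
        exact σmZ_anti
      · intro k hk
        rcases lt_trichotomy (k:ℕ) (i:ℕ) with h1 | h1 | h1
        · simp [h1, h1.trans h]
        · exact absurd (Fin.ext h1) hk
        · have h2 : ¬ (k:ℕ) < (i:ℕ) := by omega
          have h3 : (k:ℕ) ≠ (i:ℕ) := by omega
          simp only [if_neg h2, if_neg h3]
          by_cases h4 : (k:ℕ) < (j:ℕ)
          · simp [h4]
          · by_cases h5 : (k:ℕ) = (j:ℕ) <;> simp [h4, h5]
    · refine anticomm _ _ j ?_ ?_
      · simp only [lt_irrefl, if_false, eq_self_iff_true, if_true, if_pos h]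
        exact Zσm_anti
      · intro k hk
        rcases lt_trichotomy (k:ℕ) (j:ℕ) with h1 | h1 | h1
        · simp [h1, h1.trans h]
        · exact absurd (Fin.ext h1) hk
        · have h2 : ¬ (k:ℕ) < (j:ℕ) := by omega
          have h3 : (k:ℕ) ≠ (j:ℕ) := by omega
          simp only [if_neg h2, if_neg h3]
          by_cases h4 : (k:ℕ) < (i:ℕ)
          · simp [h4]
          · by_cases h5 : (k:ℕ) = (i:ℕ) <;> simp [h4, h5]
  constructor
  · intro i j
    by_cases hij : i = j
    · subst hij
      simp only [ann, tens_mul]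
      rw [tens_zero_of _ i (by
        simp only [lt_irrefl, if_false, eq_self_iff_true, if_true]
        exact σmσm)]
      simp
    · exact key1 i j hij
  · intro i j
    by_cases hij : i = j
    · subst hij
      rw [if_pos rfl]
      simp only [ann, tens_conjTranspose, tens_mul]
      refine tens_add_to_one _ _ i ?_ ?_
      · intro k hk
        rcases lt_trichotomy (k:ℕ) (i:ℕ) with h1 | h1 | h1
        · simp [h1, ZH, ZZ]
        · exact absurd (Fin.ext h1) hk
        · have h2 : ¬ (k:ℕ) < (i:ℕ) := by omega
          have h3 : (k:ℕ) ≠ (i:ℕ) := by omega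
          simp [h2, h3]
      · simp only [lt_irrefl, if_false, eq_self_iff_true, if_true]
        exact σpσm_add
    · rw [if_neg hij]
      simp only [ann, tens_conjTranspose]
      rcases lt_or_gt_of_ne (fun h => hij (Fin.ext h) : (i:ℕ) ≠ (j:ℕ)) with h | h
      · refine anticomm _ _ i ?_ ?_
        · simp only [lt_irrefl, if_false, eq_self_iff_true, if_true, if_pos h]
          exact σpZ_anti
        · intro k hk
          rcases lt_trichotomy (k:ℕ) (i:ℕ) with h1 | h1 | h1
          · simp [h1, h1.trans h, ZH]
          · exact absurd (Fin.ext h1) hk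
          · have h2 : ¬ (k:ℕ) < (i:ℕ) := by omega
            have h3 : (k:ℕ) ≠ (i:ℕ) := by omega
            simp only [if_neg h2, if_neg h3, Matrix.conjTranspose_one]
            by_cases h4 : (k:ℕ) < (j:ℕ)
            · simp [h4]
            · by_cases h5 : (k:ℕ) = (j:ℕ) <;> simp [h4, h5]
      · refine anticomm _ _ j ?_ ?_
        · simp only [lt_irrefl, if_false, eq_self_iff_true, if_true, if_pos h, ZH]
          exact Zσm_anti
        · intro k hk
          rcases lt_trichotomy (k:ℕ) (j:ℕ) with h1 | h1 | h1
          · simp [h1, h1.trans h, ZH]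
          · exact absurd (Fin.ext h1) hk
          · have h2 : ¬ (k:ℕ) < (j:ℕ) := by omega
            have h3 : (k:ℕ) ≠ (j:ℕ) := by omega
            simp only [if_neg h2, if_neg h3]
            by_cases h4 : (k:ℕ) < (i:ℕ)
            · simp [h4, ZH]
            · by_cases h5 : (k:ℕ) = (i:ℕ) <;> simp [h4, h5]


end FQ
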